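/- Let n ≥ 1 and let X₁, X₂ be skew-Hermitian complex n×n matrices (X₁ᴴ = −X₁ and X₂ᴴ = −X₂). Let γ : [0,1] → ℂ \ {1,−1} be a continuously differentiable path, and let γ̄ be its complex-conjugate path γ̄(s) = conj(γ(s)). If Y and Z are the parallel transports of the connection A(z) dz, A(z) = X₁/(z−1) + X₂/(z+1), along γ and γ̄ respectively (with Y(0) = Z(0) = 1), then Z(s) = (Y(s)ᴴ)⁻¹ for all s ∈ [0,1]. (This expresses the paper's reality condition \overline{A(z)} = −A(\overline{z}) at the level of holonomies: the holonomy of a σ-invariant connection along the conjugated contour is the inverse conjugate-transpose of the original holonomy, which is what makes the image of the map ξ land in the hyperbolic moduli space.) -/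

import Mathlib

open Matrix

attribute [local instance] Matrix.normedAddCommGroup Matrix.normedSpace

/-- `Y` is the parallel transport along the path `γ` (with derivative `γ'`) of the
connection `A(z) dz`, `A(z) = (z-1)⁻¹ • X₁ + (z+1)⁻¹ • X₂`: it solves
`Y' = γ' • A(γ) * Y` on `[0,1]` with `Y 0 = 1`. -/
def IsParallelTransport {n : ℕ} (X₁ X₂ : Matrix (Fin n) (Fin n) ℂ)
    (γ γ' : ℝ → ℂ) (Y : ℝ → Matrix (Fin n) (Fin n) ℂ) : Prop :=
  Y 0 = 1 ∧ ∀ s ∈ Set.Icc (0 : ℝ) 1,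
    HasDerivWithinAt Y
      (γ' s • (((γ s - 1)⁻¹ • X₁ + (γ s + 1)⁻¹ • X₂) * Y s))
      (Set.Icc (0 : ℝ) 1) s

lemma matrix_mul_isBoundedBilinear (n : ℕ) :
    IsBoundedBilinearMap ℝ
      (fun p : Matrix (Fin n) (Fin n) ℂ × Matrix (Fin n) (Fin n) ℂ => p.1 * p.2) where
  add_left := fun m₁ m₂ m => add_mul _ _ _
  smul_left := fun c m₁ m₂ => smul_mul_assoc c m₁ m₂
  add_right := fun m m₁ m₂ => mul_add _ _ _
  smul_right := fun c m₁ m₂ => mul_smul_comm c m₁ m₂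
  bound := by
    refine ⟨n + 1, by positivity, fun A B => ?_⟩
    have h : (0:ℝ) ≤ (n + 1) * ‖A‖ * ‖B‖ := by positivity
    rw [Matrix.norm_le_iff h]
    intro i j
    calc ‖(A * B) i j‖ = ‖∑ k, A i k * B k j‖ := by rfl
    _ ≤ ∑ k, ‖A i k * B k j‖ := norm_sum_le _ _
    _ ≤ ∑ _k : Fin n, ‖A‖ * ‖B‖ := by
        refine Finset.sum_le_sum fun k _ => ?_
        rw [norm_mul]
        exact mul_le_mul (A.norm_entry_le_entrywise_sup_norm)
          (B.norm_entry_le_entrywise_sup_norm) (norm_nonneg _) (norm_nonneg _)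
    _ = (n : ℝ) * (‖A‖ * ‖B‖) := by simp
    _ ≤ (n + 1) * ‖A‖ * ‖B‖ := by
        rw [mul_assoc]
        exact mul_le_mul_of_nonneg_right (by linarith) (by positivity)

lemma hasDerivWithinAt_matrix_mul {n : ℕ} {f g : ℝ → Matrix (Fin n) (Fin n) ℂ}
    {f' g' : Matrix (Fin n) (Fin n) ℂ} {s : Set ℝ} {x : ℝ}
    (hf : HasDerivWithinAt f f' s x) (hg : HasDerivWithinAt g g' s x) :
    HasDerivWithinAt (fun t => f t * g t) (f' * g x + f x * g') s x := by
  have hb := (matrix_mul_isBoundedBilinear n).hasFDerivAt (f x, g x)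
  have h := hb.comp_hasDerivWithinAt x (hf.prodMk hg)
  convert h using 1
  case e'_4 => rfl
  case e'_5 => rfl
  case e'_6 => rfl
  case e'_8 => rfl
  rw [(matrix_mul_isBoundedBilinear n).deriv_apply]
  dsimp
  abel

/-- The reality condition `conj (A z) = - A (conj z)` at the level of holonomies: for
skew-Hermitian `X₁`, `X₂`, the parallel transport `Z` along the complex conjugate
path equals the inverse conjugate transpose of the parallel transport `Y` along the
original path. -/
theorem conjugate_path_holonomy (n : ℕ) (hn : 1 ≤ n)
    (X₁ X₂ : Matrix (Fin n) (Fin n) ℂ) (hX₁ : X₁ᴴ = -X₁) (hX₂ : X₂ᴴ = -X₂)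
    (γ γ' : ℝ → ℂ)
    (hγ : ∀ s ∈ Set.Icc (0 : ℝ) 1, HasDerivWithinAt γ (γ' s) (Set.Icc (0 : ℝ) 1) s)
    (hγ' : ContinuousOn γ' (Set.Icc (0 : ℝ) 1))
    (havoid : ∀ s ∈ Set.Icc (0 : ℝ) 1, γ s ≠ 1 ∧ γ s ≠ -1)
    (Y Z : ℝ → Matrix (Fin n) (Fin n) ℂ)
    (hY : IsParallelTransport X₁ X₂ γ γ' Y)
    (hZ : IsParallelTransport X₁ X₂
      (fun s => starRingEnd ℂ (γ s)) (fun s => starRingEnd ℂ (γ' s)) Z) :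
    ∀ s ∈ Set.Icc (0 : ℝ) 1, Z s = ((Y s)ᴴ)⁻¹ := by
  intro s hs
  set I := Set.Icc (0 : ℝ) 1 with hI
  have key : ∀ t ∈ I, HasDerivWithinAt (fun u => (Z u)ᴴ * Y u)
      (0 : Matrix (Fin n) (Fin n) ℂ) I t := by
    intro t ht
    have hZt : HasDerivWithinAt (fun u => (Z u)ᴴ)
        (γ' t • ((Z t)ᴴ * (-(((γ t - 1)⁻¹ • X₁ + (γ t + 1)⁻¹ • X₂))))) I t := by
      have h := (hZ.2 t ht).star
      convert h using 1
      case e'_4 => rfl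
      case e'_5 => rfl
      case e'_6 => rfl
      case e'_8 => rfl
      change _ = (_ : Matrix (Fin n) (Fin n) ℂ)ᴴ
      simp only [Matrix.star_eq_conjTranspose, conjTranspose_smul, conjTranspose_mul,
        conjTranspose_add, hX₁, hX₂, map_inv₀, map_sub, map_add, _root_.map_one,
        Complex.conj_conj, RCLike.star_def]
      simp only [Matrix.mul_add, smul_smul, Matrix.mul_smul, Matrix.smul_mul, smul_neg,
        Matrix.mul_neg, neg_smul, smul_add, mul_comm]
      abel
    have hYt := hY.2 t ht
    have h := hasDerivWithinAt_matrix_mul hZt hYt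
    convert h using 1
    rw [Matrix.smul_mul, Matrix.mul_smul]
    simp only [Matrix.mul_neg, Matrix.neg_mul, smul_neg, smul_mul_assoc, mul_smul_comm,
      Matrix.mul_assoc, neg_add_cancel]
  have hconst : (Z s)ᴴ * Y s = 1 := by
    have h0 : (Z 0)ᴴ * Y 0 = 1 := by simp [hZ.1, hY.1]
    have h0mem : (0 : ℝ) ∈ I := Set.left_mem_Icc.2 zero_le_one
    have hle := (convex_Icc (0 : ℝ) 1).norm_image_sub_le_of_norm_hasDerivWithin_le
      (C := 0) (f' := fun _ => (0 : Matrix (Fin n) (Fin n) ℂ)) key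
      (fun x _ => by simp) h0mem hs
    simp only [norm_zero, zero_mul] at hle
    have : (Z s)ᴴ * Y s - (Z 0)ᴴ * Y 0 = 0 := by
      rwa [← norm_le_zero_iff]
    rw [sub_eq_zero] at this
    rw [this, h0]
  have h2 : (Y s)ᴴ * Z s = 1 := by
    have := congrArg conjTranspose hconst
    simpa [conjTranspose_mul] using this
  exact (Matrix.inv_eq_right_inv h2).symm
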